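/- Let G10' be the interlacement graph of the matching { {0,5}, {1,10}, {2,15}, {3,16}, {4,9}, {6,13}, {7,14}, {8,19}, {11,18}, {12,17} } of {0,...,19}, with vertex set {0,...,9} where vertex i corresponds to the i-th chord in the listed order and vertices i, j are adjacent if and only if the corresponding chords are interlaced. Then G10' is connected, every vertex of G10' has even degree, G10' satisfies conditions C2 and B3, and yet G10' fails the STZ condition (there is no diagonal matrix Λ over GF(2) such that M + Λ is idempotent, where M is the adjacency matrix of G10' over GF(2)). -/

import Mathlib

/-- Two sorted pairs (chords) are interlaced. -/
def Interlaced (p q : ℕ × ℕ) : Prop :=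
  (p.1 < q.1 ∧ q.1 < p.2 ∧ p.2 < q.2) ∨ (q.1 < p.1 ∧ p.1 < q.2 ∧ q.2 < p.2)

/-- Interlacement graph of a tuple of chords: vertex `i` corresponds to the `i`-th chord,
and two vertices are adjacent iff the corresponding chords are interlaced. -/
def interGraph {n : ℕ} (c : Fin n → ℕ × ℕ) : SimpleGraph (Fin n) where
  Adj i j := i ≠ j ∧ Interlaced (c i) (c j)
  symm := ⟨fun _ _ h => ⟨h.1.symm, Or.symm h.2⟩⟩
  loopless := ⟨fun _ h => h.1 rfl⟩

/-- Condition C1: every vertex has even degree. -/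
def CondC1 {V : Type*} (G : SimpleGraph V) : Prop :=
  ∀ v : V, Even (G.neighborSet v).ncard

/-- Condition C2: each pair of distinct non-adjacent vertices has an even number
(possibly zero) of common neighbours. -/
def CondC2 {V : Type*} (G : SimpleGraph V) : Prop :=
  ∀ u v : V, u ≠ v → ¬ G.Adj u v → Even {w | G.Adj u w ∧ G.Adj v w}.ncard

/-- Condition B3 (Biryukov): for any three pairwise adjacent vertices `a`, `b`, `c`,
the number of vertices `w ∉ {b, c}` adjacent to `a` but to neither `b` nor `c`, plus
the number of vertices `w ≠ a` adjacent to both `b` and `c` but not to `a`, is even. -/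
def CondB3 {V : Type*} (G : SimpleGraph V) : Prop :=
  ∀ a b c : V, G.Adj a b → G.Adj a c → G.Adj b c →
    Even ({w | w ≠ b ∧ w ≠ c ∧ G.Adj a w ∧ ¬ G.Adj b w ∧ ¬ G.Adj c w}.ncard +
          {w | w ≠ a ∧ ¬ G.Adj a w ∧ G.Adj b w ∧ G.Adj c w}.ncard)

open Classical in
/-- Adjacency matrix of a simple graph over `GF(2) = ZMod 2`. -/
noncomputable def adjMat2 {V : Type*} (G : SimpleGraph V) : Matrix V V (ZMod 2) :=
  Matrix.of fun i j => if G.Adj i j then 1 else 0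

/-- The Shtylla–Traldi–Zulli condition: there is a diagonal matrix `Λ` over `GF(2)`
such that `M + Λ` is idempotent, where `M` is the adjacency matrix over `GF(2)`. -/
def CondSTZ {V : Type*} [Fintype V] [DecidableEq V] (G : SimpleGraph V) : Prop :=
  ∃ d : V → ZMod 2,
    (adjMat2 G + Matrix.diagonal d) * (adjMat2 G + Matrix.diagonal d)
      = adjMat2 G + Matrix.diagonal d

/-- The chords of the matching `{{0,5},{1,10},{2,15},{3,16},{4,9},{6,13},{7,14},{8,19},{11,18},{12,17}}`
of `{0, ..., 19}`, in the listed order. -/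
def L10chords' : Fin 10 → ℕ × ℕ :=
  ![(0, 5), (1, 10), (2, 15), (3, 16), (4, 9), (6, 13), (7, 14), (8, 19), (11, 18), (12, 17)]

/-- The interlacement graph of that matching. -/
def G10' : SimpleGraph (Fin 10) := interGraph L10chords'


instance instDecInterlaced (p q : ℕ × ℕ) : Decidable (Interlaced p q) := by
  unfold Interlaced; infer_instance

instance instDecAdjG10' : DecidableRel G10'.Adj := fun i j =>
  decidable_of_iff (i ≠ j ∧ Interlaced (L10chords' i) (L10chords' j)) Iff.rfl

/-- Explicit adjacency matrix of `G10'` over `GF(2)`. -/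
def M0aux : Matrix (Fin 10) (Fin 10) (ZMod 2) :=
  !![0,1,1,1,1,0,0,0,0,0;
     1,0,1,1,0,1,1,1,0,0;
     1,1,0,1,0,0,0,1,1,1;
     1,1,1,0,0,0,0,1,1,1;
     1,0,0,0,0,1,1,1,0,0;
     0,1,0,0,1,0,1,1,1,1;
     0,1,0,0,1,1,0,1,1,1;
     0,1,1,1,1,1,1,0,0,0;
     0,0,1,1,0,1,1,0,0,0;
     0,0,1,1,0,1,1,0,0,0]

set_option maxRecDepth 100000 in
lemma adjMat2_G10'_aux : adjMat2 G10' = M0aux := by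
  ext i j
  rw [adjMat2, Matrix.of_apply]
  fin_cases i <;> fin_cases j <;>
    first
      | (rw [if_pos (by decide)]; rfl)
      | (rw [if_neg (by decide)]; rfl)

lemma entry_eq_aux (d : Fin 10 → ZMod 2)
    (h : (M0aux + Matrix.diagonal d) * (M0aux + Matrix.diagonal d)
          = M0aux + Matrix.diagonal d)
    (i j : Fin 10) (hij : i ≠ j) :
    (M0aux * M0aux) i j + d i * M0aux i j + M0aux i j * d j = M0aux i j := by
  rw [add_mul, mul_add, mul_add, Matrix.diagonal_mul_diagonal] at h
  have h' := congrFun (congrFun h i) j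
  simp only [Matrix.add_apply, Matrix.mul_diagonal, Matrix.diagonal_mul,
    Matrix.diagonal_apply_ne _ hij] at h'
  rw [add_zero] at h'
  linear_combination h'

lemma reach_aux : ∀ v : Fin 10, G10'.Reachable 1 v := by
  intro v
  fin_cases v
  · exact (by decide : G10'.Adj 1 0).reachable
  · exact SimpleGraph.Reachable.refl _
  · exact (by decide : G10'.Adj 1 2).reachable
  · exact (by decide : G10'.Adj 1 3).reachable
  · exact ((by decide : G10'.Adj 1 0).reachable).trans (by decide : G10'.Adj 0 4).reachable
  · exact (by decide : G10'.Adj 1 5).reachable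
  · exact (by decide : G10'.Adj 1 6).reachable
  · exact (by decide : G10'.Adj 1 7).reachable
  · exact ((by decide : G10'.Adj 1 2).reachable).trans (by decide : G10'.Adj 2 8).reachable
  · exact ((by decide : G10'.Adj 1 2).reachable).trans (by decide : G10'.Adj 2 9).reachable


/-- `G10'` is connected, has all degrees even, satisfies C2 and B3, but fails the STZ
condition. -/
theorem G10'_counterexample :
    G10'.Connected ∧ CondC1 G10' ∧ CondC2 G10' ∧ CondB3 G10' ∧ ¬ CondSTZ G10' := by
  refine ⟨?_, ?_, ?_, ?_, ?_⟩
  · have hp : G10'.Preconnected := fun u v => ((reach_aux u).symm.trans (reach_aux v))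
    rw [SimpleGraph.connected_iff]
    exact ⟨hp, ⟨1⟩⟩
  · unfold CondC1
    simp only [SimpleGraph.neighborSet, Set.ncard_eq_toFinset_card', Set.toFinset_setOf]
    decide
  · unfold CondC2
    simp only [Set.ncard_eq_toFinset_card', Set.toFinset_setOf]
    decide
  · unfold CondB3
    simp only [Set.ncard_eq_toFinset_card', Set.toFinset_setOf]
    decide
  · rintro ⟨d, h⟩
    rw [adjMat2_G10'_aux] at h
    have h15 := entry_eq_aux d h 1 5 (by decide)
    have h58 := entry_eq_aux d h 5 8 (by decide)
    have h28 := entry_eq_aux d h 2 8 (by decide)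
    have h12 := entry_eq_aux d h 1 2 (by decide)
    rw [(by decide : (M0aux * M0aux) 1 5 = 0), (by decide : M0aux 1 5 = 1)] at h15
    rw [(by decide : (M0aux * M0aux) 5 8 = 1), (by decide : M0aux 5 8 = 1)] at h58
    rw [(by decide : (M0aux * M0aux) 2 8 = 1), (by decide : M0aux 2 8 = 1)] at h28
    rw [(by decide : (M0aux * M0aux) 1 2 = 1), (by decide : M0aux 1 2 = 1)] at h12
    have e : ∀ x : ZMod 2, x = 0 ∨ x = 1 := by decide
    rcases e (d 1) with h1|h1 <;> rcases e (d 2) with h2|h2 <;>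
      rcases e (d 5) with h5|h5 <;> rcases e (d 8) with h8|h8 <;>
        (rw [h1] at h15 h12; rw [h2] at h28 h12; rw [h5] at h15 h58; rw [h8] at h58 h28;
         revert h15 h58 h28 h12; decide)
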